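/- Let G₁ = (S₁, L₁, H₁) and G₂ = (S₂, L₂, H₂) be n-channel open quantum systems, and set G̃₂ = G₁⁻¹ ◁ G₂ ◁ G₁ where G₁⁻¹ = (S₁†, −S₁†L₁, −H₁) (this triple product is unambiguous by associativity of the series product). Then: (a) G₂ ◁ G₁ = G₁ ◁ G̃₂, and (b) G̃₂ = ( S₁†S₂S₁, S₁†(S₂ − I)L₁ + S₁†L₂, H₂ + Im{ L₂†(S₂ + I)L₁ − L₁†S₂L₁ } ), componentwise as triples. -/
import Mathlib


noncomputable section

open Finset

variable {E : Type*} [NormedAddCommGroup E] [InnerProductSpace ℂ E] [CompleteSpace E]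

/-- `Im{A} = (A - A*)/(2i)`. -/
def imOp (A : E →L[ℂ] E) : E →L[ℂ] E := (2 * Complex.I)⁻¹ • (A - star A)

/-- An open quantum system `(S, L, H)` with field channels indexed by `ι`: an `ι×ι` matrix
`S` of bounded operators, an `ι`-vector `L` of bounded operators, and an operator `H`. -/
structure QOpen (ι : Type*) (E : Type*) [NormedAddCommGroup E] [InnerProductSpace ℂ E]
    [CompleteSpace E] where
  S : Matrix ι ι (E →L[ℂ] E)
  L : ι → E →L[ℂ] E
  H : E →L[ℂ] E

/-- The scattering matrix of `G` is unitary: `S†S = SS† = I`. -/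
def QOpen.unitaryS {ι : Type*} [Fintype ι] [DecidableEq ι] (G : QOpen ι E) : Prop :=
  G.S.conjTranspose * G.S = 1 ∧ G.S * G.S.conjTranspose = 1

/-- The series product `G₂ ◁ G₁ = (S₂S₁, L₂ + S₂L₁, H₁ + H₂ + Im{L₂†S₂L₁})`. -/
def series {ι : Type*} [Fintype ι] (G₂ G₁ : QOpen ι E) : QOpen ι E where
  S := G₂.S * G₁.S
  L := fun j => G₂.L j + ∑ k, G₂.S j k * G₁.L k
  H := G₁.H + G₂.H + imOp (∑ j, ∑ k, star (G₂.L j) * G₂.S j k * G₁.L k)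

/-- The inverse system `G⁻¹ = (S†, −S†L, −H)`. -/
def QOpen.inv {ι : Type*} [Fintype ι] (G : QOpen ι E) : QOpen ι E where
  S := G.S.conjTranspose
  L := fun j => -(∑ k, star (G.S k j) * G.L k)
  H := -G.H

section Aux

open Matrix

variable {ι : Type*} [Fintype ι]

lemma qopen_ext (a b : QOpen ι E) (h1 : a.S = b.S) (h2 : a.L = b.L) (h3 : a.H = b.H) :
    a = b := by
  cases a; cases b; cases h1; cases h2; cases h3; rfl

set_option linter.unusedSectionVars false

lemma sumA (S : Matrix ι ι (E →L[ℂ] E)) (L : ι → E →L[ℂ] E) (j : ι) :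
    ∑ k, star (S k j) * L k = (Sᴴ *ᵥ L) j := by
  simp [Matrix.mulVec, dotProduct, Matrix.conjTranspose_apply]

lemma sumB (S : Matrix ι ι (E →L[ℂ] E)) (L : ι → E →L[ℂ] E) (j : ι) :
    ∑ k, S j k * L k = (S *ᵥ L) j := rfl

lemma sumC (L : ι → E →L[ℂ] E) (S : Matrix ι ι (E →L[ℂ] E)) (L' : ι → E →L[ℂ] E) :
    ∑ j, ∑ k, star (L j) * S j k * L' k = star L ⬝ᵥ S *ᵥ L' := by
  simp [dotProduct, Matrix.mulVec, Finset.mul_sum, mul_assoc]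

lemma sumD (S T : Matrix ι ι (E →L[ℂ] E)) (L : ι → E →L[ℂ] E) (j : ι) :
    ∑ k, ∑ l, star (S k j) * T k l * L l = ((Sᴴ * T) *ᵥ L) j := by
  rw [← Matrix.mulVec_mulVec, ← sumA]
  congr 1; funext k
  rw [← sumB, Finset.mul_sum]
  simp [mul_assoc]

lemma star_dot (v w : ι → (E →L[ℂ] E)) : star (star v ⬝ᵥ w) = star w ⬝ᵥ v := by
  simp [dotProduct, star_sum, Pi.star_apply]

lemma imOp_add_imOp {A B C : E →L[ℂ] E} (h : (A - star A) + (B - star B) = C - star C) :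
    imOp A + imOp B = imOp C := by
  unfold imOp; rw [← smul_add, h]

end Aux

open Matrix

/-- with `G̃₂ = G₁⁻¹ ◁ G₂ ◁ G₁` one has
(a) `G₂ ◁ G₁ = G₁ ◁ G̃₂`, and
(b) `G̃₂ = (S₁†S₂S₁, S₁†(S₂ − I)L₁ + S₁†L₂, H₂ + Im{L₂†(S₂ + I)L₁ − L₁†S₂L₁})`,
componentwise as triples. -/
theorem stmt_5 {ι : Type*} [Fintype ι] [DecidableEq ι]
    (G₁ G₂ : QOpen ι E)
    (hS₁ : G₁.unitaryS) (hS₂ : G₂.unitaryS)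
    (hH₁ : IsSelfAdjoint G₁.H) (hH₂ : IsSelfAdjoint G₂.H) :
    series G₂ G₁ = series G₁ (series (series G₁.inv G₂) G₁)
      ∧ series (series G₁.inv G₂) G₁
        = QOpen.mk (G₁.S.conjTranspose * G₂.S * G₁.S)
            (fun j =>
              (∑ k, ∑ l, star (G₁.S k j) * (G₂.S - 1) k l * G₁.L l)
                + ∑ k, star (G₁.S k j) * G₂.L k)
            (G₂.H + imOp ((∑ j, ∑ k, star (G₂.L j) * (G₂.S + 1) j k * G₁.L k)
                - ∑ j, ∑ k, star (G₁.L j) * G₂.S j k * G₁.L k)) := by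
  have hc1 : G₁.S * (G₁.S.conjTranspose * (G₂.S - 1)) = G₂.S - 1 := by
    rw [← mul_assoc, hS₁.2, one_mul]
  have hc2 : G₁.S * (G₁.S.conjTranspose * G₂.S) = G₂.S := by
    rw [← mul_assoc, hS₁.2, one_mul]
  have hb : series (series G₁.inv G₂) G₁
      = QOpen.mk (G₁.S.conjTranspose * G₂.S * G₁.S)
          (fun j =>
            (∑ k, ∑ l, star (G₁.S k j) * (G₂.S - 1) k l * G₁.L l)
              + ∑ k, star (G₁.S k j) * G₂.L k)
          (G₂.H + imOp ((∑ j, ∑ k, star (G₂.L j) * (G₂.S + 1) j k * G₁.L k)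
              - ∑ j, ∑ k, star (G₁.L j) * G₂.S j k * G₁.L k)) := by
    refine qopen_ext _ _ rfl ?_ ?_
    · funext j
      show (-((G₁.S.conjTranspose *ᵥ G₁.L) j) + (G₁.S.conjTranspose *ᵥ G₂.L) j)
            + ((G₁.S.conjTranspose * G₂.S) *ᵥ G₁.L) j
          = (∑ k, ∑ l, star (G₁.S k j) * (G₂.S - 1) k l * G₁.L l)
              + ∑ k, star (G₁.S k j) * G₂.L k
      rw [sumD, sumA, Matrix.mul_sub, Matrix.mul_one, Matrix.sub_mulVec, Pi.sub_apply]
      abel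
    · show G₁.H + (G₂.H + -G₁.H
            + imOp (∑ j, ∑ k,
                star ((-(G₁.S.conjTranspose *ᵥ G₁.L)) j) * G₁.S.conjTranspose j k * G₂.L k))
          + imOp (∑ j, ∑ k,
              star ((-(G₁.S.conjTranspose *ᵥ G₁.L) + G₁.S.conjTranspose *ᵥ G₂.L) j)
                * (G₁.S.conjTranspose * G₂.S) j k * G₁.L k)
        = G₂.H + imOp ((∑ j, ∑ k, star (G₂.L j) * (G₂.S + 1) j k * G₁.L k)
            - ∑ j, ∑ k, star (G₁.L j) * G₂.S j k * G₁.L k)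
      simp only [sumC]
      rw [star_neg, star_mulVec, conjTranspose_conjTranspose, star_add, star_neg,
        star_mulVec, star_mulVec, conjTranspose_conjTranspose]
      have e1 : -(star G₁.L ᵥ* G₁.S) ⬝ᵥ G₁.S.conjTranspose *ᵥ G₂.L
          = -(star G₁.L ⬝ᵥ G₂.L) := by
        rw [neg_dotProduct, ← dotProduct_mulVec, mulVec_mulVec, hS₁.2, one_mulVec]
      have e2 : (-(star G₁.L ᵥ* G₁.S) + star G₂.L ᵥ* G₁.S)
            ⬝ᵥ (G₁.S.conjTranspose * G₂.S) *ᵥ G₁.L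
          = -(star G₁.L ⬝ᵥ G₂.S *ᵥ G₁.L) + star G₂.L ⬝ᵥ G₂.S *ᵥ G₁.L := by
        rw [add_dotProduct, neg_dotProduct, ← dotProduct_mulVec, ← dotProduct_mulVec,
          mulVec_mulVec, hc2]
      rw [e1, e2, add_mulVec, one_mulVec, dotProduct_add]
      have him : imOp (-(star G₁.L ⬝ᵥ G₂.L))
            + imOp (-(star G₁.L ⬝ᵥ G₂.S *ᵥ G₁.L) + star G₂.L ⬝ᵥ G₂.S *ᵥ G₁.L)
          = imOp (star G₂.L ⬝ᵥ G₂.S *ᵥ G₁.L + star G₂.L ⬝ᵥ G₁.L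
              - star G₁.L ⬝ᵥ G₂.S *ᵥ G₁.L) := by
        apply imOp_add_imOp
        simp only [star_add, star_sub, star_neg, star_star, star_dot]
        abel
      rw [← him]
      abel
  refine ⟨?_, hb⟩
  rw [hb]
  refine qopen_ext _ _ ?_ ?_ ?_
  · show G₂.S * G₁.S = G₁.S * (G₁.S.conjTranspose * G₂.S * G₁.S)
    simp only [← mul_assoc]
    rw [hS₁.2, one_mul]
  · funext j
    show G₂.L j + (G₂.S *ᵥ G₁.L) j
        = G₁.L j + ∑ k, G₁.S j k
            * ((∑ m, ∑ l, star (G₁.S m k) * (G₂.S - 1) m l * G₁.L l)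
                + (G₁.S.conjTranspose *ᵥ G₂.L) k)
    simp only [sumD]
    simp only [sumB]
    rw [show (fun k => ((G₁.S.conjTranspose * (G₂.S - 1)) *ᵥ G₁.L) k
          + (G₁.S.conjTranspose *ᵥ G₂.L) k)
        = (G₁.S.conjTranspose * (G₂.S - 1)) *ᵥ G₁.L + G₁.S.conjTranspose *ᵥ G₂.L from rfl]
    rw [mulVec_add, mulVec_mulVec, mulVec_mulVec, hc1, hS₁.2, one_mulVec,
      Matrix.sub_mulVec, Matrix.one_mulVec]
    simp only [Pi.add_apply, Pi.sub_apply]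
    abel
  · show G₁.H + G₂.H + imOp (∑ j, ∑ k, star (G₂.L j) * G₂.S j k * G₁.L k)
        = (G₂.H + imOp ((∑ j, ∑ k, star (G₂.L j) * (G₂.S + 1) j k * G₁.L k)
              - ∑ j, ∑ k, star (G₁.L j) * G₂.S j k * G₁.L k))
          + G₁.H
          + imOp (∑ j, ∑ k, star (G₁.L j) * G₁.S j k
              * ((∑ m, ∑ l, star (G₁.S m k) * (G₂.S - 1) m l * G₁.L l)
                  + (G₁.S.conjTranspose *ᵥ G₂.L) k))
    simp only [sumD]
    simp only [sumC]
    rw [show (fun k => ((G₁.S.conjTranspose * (G₂.S - 1)) *ᵥ G₁.L) k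
          + (G₁.S.conjTranspose *ᵥ G₂.L) k)
        = (G₁.S.conjTranspose * (G₂.S - 1)) *ᵥ G₁.L + G₁.S.conjTranspose *ᵥ G₂.L from rfl]
    rw [mulVec_add, mulVec_mulVec, mulVec_mulVec, hc1, hS₁.2, one_mulVec,
      Matrix.sub_mulVec, Matrix.one_mulVec, add_mulVec, one_mulVec]
    rw [dotProduct_add, dotProduct_add, dotProduct_sub]
    have him : imOp (star G₂.L ⬝ᵥ G₂.S *ᵥ G₁.L + star G₂.L ⬝ᵥ G₁.L
            - star G₁.L ⬝ᵥ G₂.S *ᵥ G₁.L)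
          + imOp (star G₁.L ⬝ᵥ G₂.S *ᵥ G₁.L - star G₁.L ⬝ᵥ G₁.L + star G₁.L ⬝ᵥ G₂.L)
        = imOp (star G₂.L ⬝ᵥ G₂.S *ᵥ G₁.L) := by
      apply imOp_add_imOp
      simp only [star_add, star_sub, star_neg, star_star, star_dot]
      abel
    rw [← him]
    abel
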